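/- An ortholattice satisfies the condition (a →₁ b = 1 ⟺ a ≤ b), where a →₁ b := a' ∪ (a∩b) (the Sasaki hook), if and only if it is orthomodular. -/
import Mathlib


/-- An ortholattice as an algebra ⟨α, ', ∪, ∩⟩ with join `j` and
orthocomplement `c` primitive, and meet defined by De Morgan. -/
structure OrthoLattice (α : Type*) where
  j : α → α → α
  c : α → α
  j_comm : ∀ a b, j a b = j b a
  j_assoc : ∀ a b d, j (j a b) d = j a (j b d)
  c_invol : ∀ a, c (c a) = a
  j_top : ∀ a b, j a (j b (c b)) = j b (c b)
  absorb : ∀ a b, j a (c (j (c a) (c b))) = a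

namespace OrthoLattice

variable {α : Type*}

/-- meet: a ∩ b = (a' ∪ b')' -/
def m (L : OrthoLattice α) (a b : α) : α := L.c (L.j (L.c a) (L.c b))

/-- the unit 1 = a ∪ a' -/
def one (L : OrthoLattice α) (a : α) : α := L.j a (L.c a)

/-- quantum equivalence a ≡ b = (a∩b) ∪ (a'∩b') -/
def equiv (L : OrthoLattice α) (a b : α) : α := L.j (L.m a b) (L.m (L.c a) (L.c b))

/-- classical equivalence a ≡₀ b = (a'∪b) ∩ (a∪b') -/
def equiv0 (L : OrthoLattice α) (a b : α) : α := L.m (L.j (L.c a) b) (L.j a (L.c b))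

/-- Sasaki hook a →₁ b = a' ∪ (a ∩ b) -/
def sasaki (L : OrthoLattice α) (a b : α) : α := L.j (L.c a) (L.m a b)

end OrthoLattice

namespace OrthoLattice

variable {α : Type*} (L : OrthoLattice α)

lemma c_inj {a b : α} (h : L.c a = L.c b) : a = b := by
  have := congrArg L.c h
  rwa [L.c_invol, L.c_invol] at this

lemma absorb' (a b : α) : L.j a (L.m a b) = a := L.absorb a b

lemma c_m (a b : α) : L.c (L.m a b) = L.j (L.c a) (L.c b) := by
  simp [m, L.c_invol]

lemma c_j (a b : α) : L.c (L.j a b) = L.m (L.c a) (L.c b) := by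
  simp [m, L.c_invol]

lemma m_comm (a b : α) : L.m a b = L.m b a := by
  simp [m, L.j_comm]

lemma m_absorb (a b : α) : L.m a (L.j a b) = a := by
  have h := L.absorb (L.c a) (L.c b)
  simp only [m, L.c_invol] at h ⊢
  rw [h, L.c_invol]

lemma j_idem (a : α) : L.j a a = a := by
  have h1 := L.absorb' a (L.j a a)
  rwa [L.m_absorb] at h1

lemma m_idem (a : α) : L.m a a = a := by
  simp [m, L.j_idem, L.c_invol]

lemma le_of_j {a b : α} (h : L.j a b = b) : L.m a b = a := by
  have hb : L.c b = L.m (L.c a) (L.c b) := by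
    conv_lhs => rw [← h, L.c_j]
  have : L.j (L.c a) (L.c b) = L.c a := by
    rw [hb]; exact L.absorb' _ _
  simp [m, this, L.c_invol]

lemma j_of_le {a b : α} (h : L.m a b = a) : L.j a b = b := by
  have h1 : L.j (L.c a) (L.c b) = L.c a := by
    have := congrArg L.c h
    rwa [m, L.c_invol] at this
  have h2 : L.j (L.c b) (L.c a) = L.c a := by rwa [L.j_comm] at h1
  have h3 := L.le_of_j h2
  have h4 : L.c (L.j b a) = L.c b := by rwa [m, L.c_invol, L.c_invol] at h3
  have := L.c_inj h4
  rwa [L.j_comm] at this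

lemma one_const (a b : α) : L.one a = L.one b := by
  have h1 : L.j (L.one a) (L.one b) = L.one b := by
    rw [one, one, L.j_assoc]
    rw [L.j_top (L.c a) b, L.j_top a b]
  have h2 : L.j (L.one b) (L.one a) = L.one a := by
    rw [one, one, L.j_assoc]
    rw [L.j_top (L.c b) a, L.j_top b a]
  rw [← h2, L.j_comm, h1]

lemma j_one (x a : α) : L.j x (L.one a) = L.one a := L.j_top x a

lemma zero_eq (x : α) : L.c (L.one x) = L.m x (L.c x) := by
  simp [one, m, L.c_invol, L.j_comm]

lemma j_zero (x a : α) : L.j x (L.c (L.one a)) = x := by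
  rw [L.one_const a x, L.zero_eq]
  exact L.absorb' x (L.c x)

end OrthoLattice

/-- an ortholattice satisfies (a →₁ b = 1 ⟺ a ≤ b) iff it is
orthomodular. -/
theorem stmt6 {α : Type*} (L : OrthoLattice α) :
    (∀ a b : α, L.sasaki a b = L.one a ↔ L.m a b = a) ↔
      (∀ a b : α, L.j a (L.m (L.c a) (L.j a b)) = L.j a b) := by
  constructor
  · intro H a b
    set u := L.j a b with hu
    set d := L.j a (L.m (L.c a) u) with hd
    -- d ≤ u
    have hdu : L.j d u = u := by
      rw [hd, L.j_assoc, L.j_comm (L.m (L.c a) u) u, L.m_comm, L.absorb' u (L.c a)]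
      rw [hu, ← L.j_assoc, L.j_idem]
    have hmdu : L.m d u = d := L.le_of_j hdu
    have hmud : L.m u d = d := by rw [L.m_comm]; exact hmdu
    -- sasaki u d = one u
    have hs : L.sasaki u d = L.one u := by
      rw [OrthoLattice.sasaki, hmud]
      have hct : L.c (L.m (L.c a) u) = L.j a (L.c u) := by
        rw [L.c_m, L.c_invol]
      calc L.j (L.c u) d
          = L.j (L.j (L.c u) a) (L.m (L.c a) u) := by rw [hd, L.j_assoc]
        _ = L.j (L.c (L.m (L.c a) u)) (L.m (L.c a) u) := by
              rw [hct, L.j_comm a (L.c u)]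
        _ = L.one (L.c (L.m (L.c a) u)) := by
              rw [OrthoLattice.one, L.c_invol]
        _ = L.one u := L.one_const _ _
    have := (H u d).mp hs
    rw [hmud] at this
    exact this
  · intro OM a b
    constructor
    · intro h
      set x := L.m a b with hx
      -- x ≤ a
      have hxa : L.j x a = a := by
        rw [L.j_comm]; exact L.absorb' a b
      have hOM := OM x a
      rw [hxa] at hOM
      -- m (c x) a = 0
      have hz : L.m a (L.c x) = L.c (L.one a) := by
        have := congrArg L.c h
        rw [OrthoLattice.sasaki] at this
        rw [← this, L.c_j]
        congr 1
        exact (L.c_invol a).symm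
      have hz' : L.m (L.c x) a = L.c (L.one a) := by rw [L.m_comm]; exact hz
      rw [hz', L.j_zero] at hOM
      exact hOM
    · intro h
      rw [OrthoLattice.sasaki, h, L.j_comm]
      rfl
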